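/- Let f : I → ℝ be defined on a finite nonempty set I, and let α → ∞. For each x define W_α(x) = exp(α · h(x) + s(x)) where h : I → ℕ and s : I → ℝ. Then lim_{α→∞} W_α(x) / (∑_{y ∈ I} W_α(y)) is nonzero if and only if h(x) = max_{y ∈ I} h(y); and in that case the limit equals exp(s(x)) / ∑_{y : h(y) = max h} exp(s(y)). -/

import Mathlib

theorem stmt_5 {I : Type} [Fintype I] [Nonempty I]
    (h : I → ℕ) (s : I → ℝ) (x : I) :
    ((∃ L : ℝ, L ≠ 0 ∧ Filter.Tendsto
        (fun α : ℝ => Real.exp (α * (h x : ℝ) + s x) / ∑ y : I, Real.exp (α * (h y : ℝ) + s y))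
        Filter.atTop (nhds L)) ↔ h x = Finset.univ.sup h) ∧
    (h x = Finset.univ.sup h →
      Filter.Tendsto
        (fun α : ℝ => Real.exp (α * (h x : ℝ) + s x) / ∑ y : I, Real.exp (α * (h y : ℝ) + s y))
        Filter.atTop
        (nhds (Real.exp (s x) /
          ∑ y ∈ Finset.univ.filter (fun y => h y = Finset.univ.sup h), Real.exp (s y)))) := by
  set M := Finset.univ.sup h with hM
  obtain ⟨z, _, hz⟩ := Finset.exists_mem_eq_sup Finset.univ Finset.univ_nonempty h
  set S : ℝ := ∑ y ∈ Finset.univ.filter (fun y => h y = M), Real.exp (s y) with hS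
  have hSpos : 0 < S := by
    refine Finset.sum_pos' (fun i _ => (Real.exp_pos _).le) ⟨z, ?_, Real.exp_pos _⟩
    simp [hz.symm]
    exact hM.symm
  have key : ∀ y : I, Filter.Tendsto
      (fun α : ℝ => Real.exp (α * (h y : ℝ) + s y) * Real.exp (-(α * (M : ℝ))))
      Filter.atTop (nhds (if h y = M then Real.exp (s y) else 0)) := by
    intro y
    have feq : (fun α : ℝ => Real.exp (α * (h y : ℝ) + s y) * Real.exp (-(α * (M : ℝ))))
        = fun α => Real.exp (s y) * Real.exp (α * ((h y : ℝ) - M)) := by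
      funext α; rw [← Real.exp_add, ← Real.exp_add]; ring_nf
    rw [feq]
    by_cases hy : h y = M
    · have : ((h y : ℝ) - M) = 0 := by rw [hy]; ring
      simp [this, hy]
    · rw [if_neg hy]
      have hlt : (h y : ℝ) - M < 0 := by
        have : h y < M := lt_of_le_of_ne (Finset.le_sup (Finset.mem_univ y)) hy
        have := (Nat.cast_lt (α := ℝ)).2 this
        linarith
      have h1 : Filter.Tendsto (fun α : ℝ => α * ((h y : ℝ) - M)) Filter.atTop Filter.atBot :=
        Filter.Tendsto.atTop_mul_const_of_neg hlt Filter.tendsto_id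
      have h2 : Filter.Tendsto (fun α : ℝ => Real.exp (α * ((h y : ℝ) - M)))
          Filter.atTop (nhds 0) := Real.tendsto_exp_atBot.comp h1
      have := (tendsto_const_nhds (x := Real.exp (s y))).mul h2
      simpa using this
  have sumlim : Filter.Tendsto
      (fun α : ℝ => (∑ y : I, Real.exp (α * (h y : ℝ) + s y)) * Real.exp (-(α * (M : ℝ))))
      Filter.atTop (nhds S) := by
    have := tendsto_finset_sum (Finset.univ) (fun y _ => key y)
    have hSeq : S = ∑ y : I, (if h y = M then Real.exp (s y) else 0) := by
      rw [hS, Finset.sum_filter]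
    rw [hSeq]
    refine this.congr (fun α => ?_)
    rw [Finset.sum_mul]
  have main : Filter.Tendsto
      (fun α : ℝ => Real.exp (α * (h x : ℝ) + s x) / ∑ y : I, Real.exp (α * (h y : ℝ) + s y))
      Filter.atTop (nhds ((if h x = M then Real.exp (s x) else 0) / S)) := by
    refine ((key x).div sumlim hSpos.ne').congr (fun α => ?_)
    simp only [Pi.div_apply]
    rw [mul_div_mul_right _ _ (Real.exp_ne_zero _)]
  constructor
  · constructor
    · rintro ⟨L, hL, hLt⟩
      by_contra hne
      have h0 : L = 0 := by
        have := tendsto_nhds_unique hLt main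
        rw [if_neg hne, zero_div] at this
        exact this
      exact hL h0
    · intro hx
      refine ⟨Real.exp (s x) / S, div_ne_zero (Real.exp_ne_zero _) hSpos.ne', ?_⟩
      simpa [if_pos hx] using main
  · intro hx
    simpa [if_pos hx, hS] using main
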